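/- Define P_{(3,0)}(n) := ∑_{j=-∞}^{∞} q^{10j^2+3j} [2n choose n-5j]_q − ∑_{j=-∞}^{∞} q^{10j^2+13j+4} [2n choose n-5j-4]_q. Then P_{(3,0)}(n) satisfies P_{(3,0)}(n) = (1 + q^{2n-3} + q^{2n-2}) P_{(3,0)}(n-1) − q^{4n-7} P_{(3,0)}(n-2) for n ≥ 3, with P_{(3,0)}(1) = 1 and P_{(3,0)}(2) = 1 + q^2. -/

import Mathlib

open Finset

noncomputable section

abbrev F := RatFunc ℚ

/-- The variable `q`, a transcendental element. -/
def q : F := RatFunc.X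

/-- `(b;b)_n = ∏_{i=1}^n (1 - b^i)` -/
def pq (b : F) (n : ℕ) : F := ∏ i ∈ Finset.range n, (1 - b ^ (i + 1))

/-- Gaussian binomial coefficient in base `b`, zero when `k < 0` or `k > a`. -/
def qbin (b : F) (a k : ℤ) : F :=
  if 0 ≤ k ∧ k ≤ a then pq b a.toNat / (pq b k.toNat * pq b (a - k).toNat) else 0

/-- Primed Gaussian binomial: equals 1 when `a < 0` and `k = 0`. -/
def qbin' (b : F) (a k : ℤ) : F :=
  if a < 0 ∧ k = 0 then 1 else qbin b a k

/-- The cylindric partition polynomial `P_{(3,0)}(n)`. -/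
def P30 (n : ℕ) : F :=
  (∑ᶠ j : ℤ, q ^ (10 * j ^ 2 + 3 * j) * qbin q (2 * (n : ℤ)) ((n : ℤ) - 5 * j)) -
    ∑ᶠ j : ℤ, q ^ (10 * j ^ 2 + 13 * j + 4) * qbin q (2 * (n : ℤ)) ((n : ℤ) - 5 * j - 4)

lemma q_ne : q ≠ 0 := RatFunc.X_ne_zero

lemma qpow_ne_one {k : ℕ} (hk : 1 ≤ k) : q ^ k ≠ 1 := by
  intro h
  have h2 : (algebraMap (Polynomial ℚ) F) (Polynomial.X ^ k) = algebraMap (Polynomial ℚ) F 1 := by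
    simpa [q, RatFunc.algebraMap_X, map_pow] using h
  have := RatFunc.algebraMap_injective ℚ h2
  have hd := congrArg Polynomial.natDegree this
  simp [Polynomial.natDegree_X_pow] at hd
  omega

lemma pq_ne (n : ℕ) : pq q n ≠ 0 := by
  unfold pq
  refine Finset.prod_ne_zero_iff.mpr fun i _ => ?_
  intro h
  exact qpow_ne_one (by omega) (sub_eq_zero.mp h).symm

lemma pq_succ (n : ℕ) : pq q (n+1) = pq q n * (1 - q ^ (n+1)) := Finset.prod_range_succ _ _


lemma qbin_of_neg (b : F) {a k : ℤ} (hk : k < 0) : qbin b a k = 0 := if_neg (by omega)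
lemma qbin_of_gt (b : F) {a k : ℤ} (h : a < k) : qbin b a k = 0 := if_neg (by omega)
lemma pq_zero (b : F) : pq b 0 = 1 := Finset.prod_range_zero _
lemma qbin_zero {a : ℤ} (ha : 0 ≤ a) : qbin q a 0 = 1 := by
  rw [qbin, if_pos ⟨le_refl 0, ha⟩]
  simp [pq_zero, div_self (pq_ne _)]
lemma qbin_self {a : ℤ} (ha : 0 ≤ a) : qbin q a a = 1 := by
  rw [qbin, if_pos ⟨ha, le_refl a⟩, sub_self]
  simp [pq_zero, div_self (pq_ne _), mul_comm]
lemma one_sub_qpow_ne {k : ℕ} (hk : 1 ≤ k) : (1:F) - q ^ k ≠ 0 :=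
  sub_ne_zero.mpr (Ne.symm (qpow_ne_one hk))

lemma qbin_eval (M K : ℕ) (h : K ≤ M) :
    qbin q (M:ℤ) (K:ℤ) = pq q M / (pq q K * pq q (M-K)) := by
  rw [qbin, if_pos ⟨Int.ofNat_nonneg K, by exact_mod_cast h⟩]
  rw [show ((M:ℤ) - (K:ℤ)) = ((M - K : ℕ) : ℤ) by omega]
  simp [Int.toNat_natCast]

lemma pascalA (M : ℕ) (k : ℤ) :
    qbin q ((M:ℤ)+1) k = qbin q M k + q ^ ((M:ℤ)+1-k) * qbin q M (k-1) := by
  rcases lt_or_ge k 0 with hk | hk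
  · rw [qbin_of_neg q hk, qbin_of_neg q hk, qbin_of_neg q (by omega : k-1 < 0)]; ring
  rcases eq_or_lt_of_le hk with hk0 | hk1
  · -- k = 0
    rw [← hk0, qbin_zero (by omega), qbin_zero (by omega),
      qbin_of_neg q (by omega : (0:ℤ)-1 < 0)]
    ring
  rcases lt_or_ge (M:ℤ) k with hgt | hle
  · -- k ≥ M+1
    rcases eq_or_lt_of_le (by omega : (M:ℤ)+1 ≤ k) with he | hgt2
    · rw [← he, qbin_self (by omega), qbin_of_gt q (by omega : (M:ℤ) < (M:ℤ)+1),
        show (M:ℤ)+1-1 = (M:ℤ) by ring, qbin_self (by omega), sub_self]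
      simp
    · rw [qbin_of_gt q (by omega : (M:ℤ)+1 < k), qbin_of_gt q (by omega : (M:ℤ) < k),
        qbin_of_gt q (by omega : (M:ℤ) < k-1)]
      ring
  · -- 1 ≤ k ≤ M
    obtain ⟨a, b, rfl, hM⟩ : ∃ a b : ℕ, k = ((a:ℤ)+1) ∧ M = a+b+1 := by
      refine ⟨(k-1).toNat, (M - k.toNat), by omega, by omega⟩
    subst hM
    rw [show ((a:ℤ)+1) = ((a+1 : ℕ) : ℤ) by push_cast; ring]
    rw [show ((a+1:ℕ):ℤ)-1 = ((a : ℕ) : ℤ) by push_cast; ring]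
    rw [show ((a+b+1 : ℕ):ℤ)+1 = ((a+b+2 : ℕ) : ℤ) by push_cast; ring]
    rw [show ((a+b+2:ℕ):ℤ)-((a+1:ℕ):ℤ) = ((b+1 : ℕ) : ℤ) by push_cast; ring]
    rw [qbin_eval (a+b+2) (a+1) (by omega), qbin_eval (a+b+1) (a+1) (by omega),
        qbin_eval (a+b+1) a (by omega), zpow_natCast]
    rw [show a+b+2-(a+1) = b+1 by omega, show a+b+1-(a+1) = b by omega,
        show a+b+1-a = b+1 by omega]
    rw [show a+b+2 = (a+b+1)+1 by omega, pq_succ (a+b+1), pq_succ b, pq_succ a]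
    have n1 := pq_ne (a+b+1); have n2 := pq_ne a; have n3 := pq_ne b
    have n4 := one_sub_qpow_ne (k := a+1) (by omega)
    have n5 := one_sub_qpow_ne (k := b+1) (by omega)
    field_simp
    ring

lemma pascalB (M : ℕ) (k : ℤ) :
    qbin q ((M:ℤ)+1) k = q ^ k * qbin q M k + qbin q M (k-1) := by
  rcases lt_or_ge k 0 with hk | hk
  · rw [qbin_of_neg q hk, qbin_of_neg q hk, qbin_of_neg q (by omega : k-1 < 0)]; ring
  rcases eq_or_lt_of_le hk with hk0 | hk1
  · rw [← hk0, qbin_zero (by omega), qbin_zero (by omega),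
      qbin_of_neg q (by omega : (0:ℤ)-1 < 0)]
    simp
  rcases lt_or_ge (M:ℤ) k with hgt | hle
  · rcases eq_or_lt_of_le (by omega : (M:ℤ)+1 ≤ k) with he | hgt2
    · rw [← he, qbin_self (by omega), qbin_of_gt q (by omega : (M:ℤ) < (M:ℤ)+1),
        show (M:ℤ)+1-1 = (M:ℤ) by ring, qbin_self (by omega)]
      ring
    · rw [qbin_of_gt q (by omega : (M:ℤ)+1 < k), qbin_of_gt q (by omega : (M:ℤ) < k),
        qbin_of_gt q (by omega : (M:ℤ) < k-1)]
      ring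
  · obtain ⟨a, b, rfl, hM⟩ : ∃ a b : ℕ, k = ((a:ℤ)+1) ∧ M = a+b+1 := by
      refine ⟨(k-1).toNat, (M - k.toNat), by omega, by omega⟩
    subst hM
    rw [show ((a:ℤ)+1) = ((a+1 : ℕ) : ℤ) by push_cast; ring]
    rw [show ((a+1:ℕ):ℤ)-1 = ((a : ℕ) : ℤ) by push_cast; ring]
    rw [show ((a+b+1 : ℕ):ℤ)+1 = ((a+b+2 : ℕ) : ℤ) by push_cast; ring]
    rw [qbin_eval (a+b+2) (a+1) (by omega), qbin_eval (a+b+1) (a+1) (by omega),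
        qbin_eval (a+b+1) a (by omega), zpow_natCast]
    rw [show a+b+2-(a+1) = b+1 by omega, show a+b+1-(a+1) = b by omega,
        show a+b+1-a = b+1 by omega]
    rw [show a+b+2 = (a+b+1)+1 by omega, pq_succ (a+b+1), pq_succ b, pq_succ a]
    have n1 := pq_ne (a+b+1); have n2 := pq_ne a; have n3 := pq_ne b
    have n4 := one_sub_qpow_ne (k := a+1) (by omega)
    have n5 := one_sub_qpow_ne (k := b+1) (by omega)
    field_simp
    ring

lemma qbin_contig (M : ℕ) (k : ℤ) :
    (1 - q ^ k) * qbin q M k = (1 - q ^ ((M:ℤ)+1-k)) * qbin q M (k-1) := by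
  have hA := pascalA M k
  have hB := pascalB M k
  linear_combination hB - hA

lemma qbin_symm (b : F) (a k : ℤ) : qbin b a k = qbin b a (a - k) := by
  unfold qbin
  rcases Classical.em (0 ≤ k ∧ k ≤ a) with h | h
  · rw [if_pos h, if_pos ⟨by omega, by omega⟩, show a - (a - k) = k by ring, mul_comm]
  · rw [if_neg h, if_neg (by omega)]

def T (α β : ℤ) (n : ℕ) : F :=
  ∑ᶠ j : ℤ, q ^ (10 * j ^ 2 + α * j) * qbin q (2 * (n : ℤ)) ((n : ℤ) - 5 * j - β)

lemma qbin_out {n : ℕ} {β j : ℤ} (h : ¬(-((n:ℤ)+|β|) ≤ j ∧ j ≤ (n:ℤ)+|β|)) :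
    qbin q (2*(n:ℤ)) ((n:ℤ) - 5*j - β) = 0 := by
  have h1 := le_abs_self β
  have h2 := neg_abs_le β
  rcases lt_or_ge ((n:ℤ) - 5*j - β) 0 with hlt | hge
  · exact qbin_of_neg q hlt
  · exact qbin_of_gt q (by omega)

lemma supp_fin (c : ℤ → F) (n : ℕ) (β : ℤ) :
    (Function.support fun j : ℤ => c j * qbin q (2*(n:ℤ)) ((n:ℤ) - 5*j - β)).Finite := by
  apply Set.Finite.subset (Set.finite_Icc (-((n:ℤ)+|β|)) ((n:ℤ)+|β|))
  intro j hj
  rw [Set.mem_Icc]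
  by_contra h
  exact hj (by simp only []; rw [qbin_out h, mul_zero])

lemma supp_fin' (α β : ℤ) (n : ℕ) :
    (Function.support fun j : ℤ => q ^ (10*j^2 + α*j) * qbin q (2*(n:ℤ)) ((n:ℤ) - 5*j - β)).Finite :=
  supp_fin _ n β

lemma T_S2 (n : ℕ) (α β α' β' : ℤ) (hα : α' = -α) (hβ : β' = -β) : T α β n = T α' β' n := by
  subst hα hβ
  unfold T
  rw [← finsum_comp_equiv (Equiv.neg ℤ)]
  apply finsum_congr
  intro j
  simp only [Equiv.neg_apply]
  rw [show (10*(-j)^2 + α*(-j)) = 10*j^2 + (-α)*j by ring]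
  congr 1
  rw [qbin_symm q (2*(n:ℤ)) ((n:ℤ) - 5*(-j) - β),
    show 2*(n:ℤ) - ((n:ℤ) - 5*(-j) - β) = (n:ℤ) - 5*j - (-β) by ring]

lemma T_S1 (n : ℕ) (α β α' β' : ℤ) (a : ℕ) (hα : α' = α + 20) (hβ : β' = β + 5)
    (ha : (a:ℤ) = 10 + α) : T α β n = q ^ a * T α' β' n := by
  subst hα hβ
  unfold T
  rw [← finsum_comp_equiv (Equiv.addRight (1:ℤ)), mul_finsum _ _]
  apply finsum_congr
  intro j
  simp only [Equiv.coe_addRight]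
  rw [show (n:ℤ) - 5*(j+1) - β = (n:ℤ) - 5*j - (β+5) by ring,
      show 10*(j+1)^2 + α*(j+1) = (10 + α) + (10*j^2 + (α+20)*j) by ring,
      zpow_add₀ q_ne, ← ha, zpow_natCast]
  ring

lemma supp_smul (r : F) (f : ℤ → F) (h : (Function.support f).Finite) :
    (Function.support fun j => r * f j).Finite := by
  apply h.subset
  intro j hj
  simp only [Function.support, Set.mem_setOf_eq] at *
  exact fun h0 => hj (by rw [h0, mul_zero])

lemma T_C (n : ℕ) (α β αp αm βp : ℤ) (a b : ℕ)
    (hαp : αp = α + 5) (hαm : αm = α - 5) (hβp : βp = β + 1)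
    (ha : (a:ℤ) = (n:ℤ) - β) (hb : (b:ℤ) = (n:ℤ) + β + 1) :
    T α β n + q ^ b * T αp βp n = T α βp n + q ^ a * T αm β n := by
  subst hαp hαm hβp
  unfold T
  rw [mul_finsum _ _, mul_finsum _ _,
      ← finsum_add_distrib (supp_fin' α β n) (supp_smul _ _ (supp_fin' (α+5) (β+1) n)),
      ← finsum_add_distrib (supp_fin' α (β+1) n) (supp_smul _ _ (supp_fin' (α-5) β n))]
  apply finsum_congr
  intro j
  have hC := qbin_contig (2*n) ((n:ℤ) - 5*j - β)
  rw [show ((2*n : ℕ):ℤ) = 2*(n:ℤ) by push_cast; ring] at hC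
  rw [show (n:ℤ) - 5*j - (β+1) = ((n:ℤ) - 5*j - β) - 1 by ring]
  rw [← zpow_natCast q b, show ((b:ℤ)) = (n:ℤ)+β+1 from hb,
      ← zpow_natCast q a, show ((a:ℤ)) = (n:ℤ)-β from ha]
  rw [← mul_assoc (q ^ ((n:ℤ)+β+1)), ← zpow_add₀ q_ne ((n:ℤ)+β+1) (10*j^2+(α+5)*j),
      show ((n:ℤ)+β+1) + (10*j^2+(α+5)*j) = (10*j^2+α*j) + (2*(n:ℤ)+1-((n:ℤ)-5*j-β)) by ring,
      zpow_add₀ q_ne (10*j^2+α*j) (2*(n:ℤ)+1-((n:ℤ)-5*j-β))]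
  rw [← mul_assoc (q ^ ((n:ℤ)-β)), ← zpow_add₀ q_ne ((n:ℤ)-β) (10*j^2+(α-5)*j),
      show ((n:ℤ)-β) + (10*j^2+(α-5)*j) = (10*j^2+α*j) + ((n:ℤ)-5*j-β) by ring,
      zpow_add₀ q_ne (10*j^2+α*j) ((n:ℤ)-5*j-β)]
  linear_combination (q ^ (10*j^2+α*j)) * hC

lemma T_ST (nn n : ℕ) (h : nn = n + 1) (α β α5 α10 βm βp : ℤ) (a b c : ℕ)
    (hα5 : α5 = α+5) (hα10 : α10 = α+10) (hβm : βm = β-1) (hβp : βp = β+1)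
    (ha : (a:ℤ) = (nn:ℤ)-1+β) (hb : (b:ℤ) = (nn:ℤ)+β) (hc : (c:ℤ) = 2*(nn:ℤ)+2*β) :
    T α β nn = T α βm n + (q^a + q^b) * T α5 β n + q^c * T α10 βp n := by
  subst h hα5 hα10 hβm hβp
  unfold T
  rw [add_mul, mul_finsum _ _, mul_finsum _ _,
      mul_finsum _ _,
      ← finsum_add_distrib (supp_smul _ _ (supp_fin' (α+5) β n)) (supp_smul _ _ (supp_fin' (α+5) β n)),
      ← finsum_add_distrib (supp_fin' α (β-1) n)
        (((supp_smul _ _ (supp_fin' (α+5) β n)).union (supp_smul _ _ (supp_fin' (α+5) β n))).subset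
          (Function.support_add _ _)),
      ← finsum_add_distrib
        (((supp_fin' α (β-1) n).union
          ((((supp_smul _ _ (supp_fin' (α+5) β n)).union (supp_smul _ _ (supp_fin' (α+5) β n))).subset
            (Function.support_add _ _)))).subset (Function.support_add _ _))
        (supp_smul _ _ (supp_fin' (α+10) (β+1) n))]
  apply finsum_congr
  intro j
  rw [show ((n+1:ℕ):ℤ) = (n:ℤ)+1 by push_cast; ring]
  rw [show 2*((n:ℕ):ℤ) = ((2*n:ℕ):ℤ) by push_cast; ring]
  rw [show (n:ℤ) - 5*j - (β+1) = ((n:ℤ)+1-5*j-β) - 1 - 1 by ring]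
  rw [show (n:ℤ) - 5*j - (β-1) = (n:ℤ)+1-5*j-β by ring]
  rw [show (n:ℤ) - 5*j - β = ((n:ℤ)+1-5*j-β) - 1 by ring]
  have P1 := pascalA (2*n+1) ((n:ℤ)+1-5*j-β)
  rw [show ((2*n+1:ℕ):ℤ)+1 = 2*((n:ℤ)+1) by push_cast; ring] at P1
  rw [show ((2*n+1:ℕ):ℤ) = ((2*n:ℕ):ℤ)+1 by push_cast; ring] at P1
  have P2 := pascalA (2*n) ((n:ℤ)+1-5*j-β)
  have P3 := pascalA (2*n) (((n:ℤ)+1-5*j-β) - 1)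
  -- coefficient conversions
  rw [← zpow_natCast q a, show ((a:ℤ)) = (n:ℤ)+β by push_cast at ha ⊢; omega,
      ← zpow_natCast q b, show ((b:ℤ)) = (n:ℤ)+1+β by push_cast at hb ⊢; omega,
      ← zpow_natCast q c, show ((c:ℤ)) = 2*(n:ℤ)+2+2*β by push_cast at hc ⊢; omega]
  rw [← mul_assoc (q ^ ((n:ℤ)+β)), ← zpow_add₀ q_ne ((n:ℤ)+β) (10*j^2+(α+5)*j),
      show ((n:ℤ)+β) + (10*j^2+(α+5)*j)
        = (10*j^2+α*j) + (((2*n:ℕ):ℤ)+1-((n:ℤ)+1-5*j-β)) by push_cast; ring,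
      zpow_add₀ q_ne (10*j^2+α*j) (((2*n:ℕ):ℤ)+1-((n:ℤ)+1-5*j-β))]
  rw [← mul_assoc (q ^ ((n:ℤ)+1+β)), ← zpow_add₀ q_ne ((n:ℤ)+1+β) (10*j^2+(α+5)*j),
      show ((n:ℤ)+1+β) + (10*j^2+(α+5)*j)
        = (10*j^2+α*j) + (2*((n:ℤ)+1)-((n:ℤ)+1-5*j-β)) by push_cast; ring,
      zpow_add₀ q_ne (10*j^2+α*j) (2*((n:ℤ)+1)-((n:ℤ)+1-5*j-β))]
  rw [← mul_assoc (q ^ (2*(n:ℤ)+2+2*β)), ← zpow_add₀ q_ne (2*(n:ℤ)+2+2*β) (10*j^2+(α+10)*j),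
      show (2*(n:ℤ)+2+2*β) + (10*j^2+(α+10)*j)
        = (10*j^2+α*j) + ((2*((n:ℤ)+1)-((n:ℤ)+1-5*j-β)) + (((2*n:ℕ):ℤ)+1-(((n:ℤ)+1-5*j-β)-1)))
        by push_cast; ring,
      zpow_add₀ q_ne (10*j^2+α*j)
        ((2*((n:ℤ)+1)-((n:ℤ)+1-5*j-β)) + (((2*n:ℕ):ℤ)+1-(((n:ℤ)+1-5*j-β)-1))),
      zpow_add₀ q_ne (2*((n:ℤ)+1)-((n:ℤ)+1-5*j-β)) (((2*n:ℕ):ℤ)+1-(((n:ℤ)+1-5*j-β)-1))]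
  linear_combination (q ^ (10*j^2+α*j)) * P1 + (q ^ (10*j^2+α*j)) * P2
    + (q ^ (10*j^2+α*j) * q ^ (2*((n:ℤ)+1)-((n:ℤ)+1-5*j-β))) * P3

lemma T_P30 (n : ℕ) : P30 n = T 3 0 n - q ^ 4 * T 13 4 n := by
  unfold P30 T
  rw [mul_finsum _ _]
  congr 1
  · apply finsum_congr; intro j
    rw [show (n:ℤ) - 5*j - 0 = (n:ℤ) - 5*j by ring]
  · apply finsum_congr; intro j
    rw [show 10*j^2+13*j+4 = (4:ℤ) + (10*j^2+13*j) by ring, zpow_add₀ q_ne,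
        show ((4:ℤ)) = ((4:ℕ):ℤ) by norm_num, zpow_natCast]
    ring

lemma T_eq_single (α β : ℤ) (n : ℕ) (j0 : ℤ)
    (hlo : ∀ j : ℤ, j < j0 → 2*(n:ℤ) < (n:ℤ)-5*j-β) (hhi : ∀ j : ℤ, j0 < j → (n:ℤ)-5*j-β < 0) :
    T α β n = q ^ (10*j0^2+α*j0) * qbin q (2*(n:ℤ)) ((n:ℤ)-5*j0-β) := by
  unfold T
  rw [← Finset.sum_singleton (f := fun j : ℤ => q ^ (10*j^2+α*j) * qbin q (2*(n:ℤ)) ((n:ℤ)-5*j-β)) j0]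
  apply finsum_eq_sum_of_support_subset
  intro j hj
  simp only [Finset.coe_singleton, Set.mem_singleton_iff]
  by_contra hne
  rcases lt_or_gt_of_ne hne with h | h
  · exact hj (by simp only []; rw [qbin_of_gt q (hlo j h), mul_zero])
  · exact hj (by simp only []; rw [qbin_of_neg q (hhi j h), mul_zero])

lemma P30_one : P30 1 = 1 := by
  rw [T_P30, T_eq_single 3 0 1 0 (by intro j hj; omega) (by intro j hj; omega),
      T_eq_single 13 4 1 (-1) (by intro j hj; omega) (by intro j hj; omega)]
  norm_num
  rw [show (2:ℤ) = ((2:ℕ):ℤ) by norm_num, show (1:ℤ) = ((1:ℕ):ℤ) by norm_num,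
      qbin_eval 2 1 (by omega), qbin_eval 2 2 (by omega)]
  norm_num
  rw [pq_zero, mul_one, div_self (pq_ne 2), mul_one]
  simp only [pq, Finset.prod_range_succ, Finset.prod_range_zero, one_mul, pow_one]
  have n1 := one_sub_qpow_ne (k := 1) (by omega)
  have n2 := one_sub_qpow_ne (k := 2) (by omega)
  rw [pow_one] at n1
  have n3 : (q:F)^(3:ℤ) ≠ 0 := zpow_ne_zero _ q_ne
  have n4 : (q:F)^3 ≠ 0 := pow_ne_zero _ q_ne
  have e3 : (q:F)^(3:ℤ) = q^(3:ℕ) := by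
    rw [show ((3:ℤ)) = ((3:ℕ):ℤ) by norm_num, zpow_natCast]
  rw [e3] at *
  norm_num
  field_simp
  ring

lemma P30_two : P30 2 = 1 + q ^ 2 := by
  rw [T_P30, T_eq_single 3 0 2 0 (by intro j hj; omega) (by intro j hj; omega),
      T_eq_single 13 4 2 (-1) (by intro j hj; omega) (by intro j hj; omega)]
  norm_num
  rw [show (4:ℤ) = ((4:ℕ):ℤ) by norm_num, show (2:ℤ) = ((2:ℕ):ℤ) by norm_num,
      show (3:ℤ) = ((3:ℕ):ℤ) by norm_num,
      qbin_eval 4 2 (by omega), qbin_eval 4 3 (by omega)]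
  norm_num
  have e3 : (q:F)^(3:ℤ) = q^(3:ℕ) := by
    rw [show ((3:ℤ)) = ((3:ℕ):ℤ) by norm_num, zpow_natCast]
  rw [show ∀ Z:F, q^4 * ((q^(3:ℕ):F)⁻¹ * Z) = q * Z from fun Z => by
        field_simp [pow_ne_zero 3 q_ne]]
  simp only [pq, Finset.prod_range_succ, Finset.prod_range_zero, one_mul, pow_one]
  have n1 := one_sub_qpow_ne (k := 1) (by omega)
  have n2 := one_sub_qpow_ne (k := 2) (by omega)
  have n3 := one_sub_qpow_ne (k := 3) (by omega)
  have n4 := one_sub_qpow_ne (k := 4) (by omega)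
  rw [pow_one] at n1
  norm_num
  rw [mul_div_assoc']
  rw [div_sub_div _ _ (mul_ne_zero (mul_ne_zero n1 n2) (mul_ne_zero n1 n2))
      (mul_ne_zero (mul_ne_zero (mul_ne_zero n1 n2) n3) n1)]
  rw [div_eq_iff (mul_ne_zero (mul_ne_zero (mul_ne_zero n1 n2) (mul_ne_zero n1 n2))
      (mul_ne_zero (mul_ne_zero (mul_ne_zero n1 n2) n3) n1))]
  ring
theorem P30_rec (n : ℕ) (hn : 3 ≤ n) :
    P30 n = (1 + q ^ (2 * n - 3) + q ^ (2 * n - 2)) * P30 (n - 1)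
      - q ^ (4 * n - 7) * P30 (n - 2) := by
  obtain ⟨m, rfl⟩ : ∃ m : ℕ, n = m + 3 := ⟨n - 3, by omega⟩
  rw [show m+3-1 = m+2 by omega, show m+3-2 = m+1 by omega,
      show 2*(m+3)-3 = 2*m+3 by omega, show 2*(m+3)-2 = 2*m+4 by omega,
      show 4*(m+3)-7 = 4*m+5 by omega]
  refine mul_left_cancel₀ (pow_ne_zero (m+3) q_ne) ?_
  have h1 := T_C (m+1) 2 (-1) 7 (-3) 0 (m+2) (m+1) (by norm_num) (by norm_num) (by norm_num) (by push_cast; ring) (by push_cast; ring)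
  have h2 := T_C (m+2) 2 (-1) 7 (-3) 0 (m+3) (m+2) (by norm_num) (by norm_num) (by norm_num) (by push_cast; ring) (by push_cast; ring)
  have h3 := T_C (m+1) 2 0 7 (-3) 1 (m+1) (m+2) (by norm_num) (by norm_num) (by norm_num) (by push_cast; ring) (by push_cast; ring)
  have h4 := T_C (m+2) 2 0 7 (-3) 1 (m+2) (m+3) (by norm_num) (by norm_num) (by norm_num) (by push_cast; ring) (by push_cast; ring)
  have h5 := T_C (m+3) 2 0 7 (-3) 1 (m+3) (m+4) (by norm_num) (by norm_num) (by norm_num) (by push_cast; ring) (by push_cast; ring)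
  have h6 := T_C (m+1) 2 1 7 (-3) 2 m (m+3) (by norm_num) (by norm_num) (by norm_num) (by push_cast; ring) (by push_cast; ring)
  have h7 := T_C (m+2) 2 1 7 (-3) 2 (m+1) (m+4) (by norm_num) (by norm_num) (by norm_num) (by push_cast; ring) (by push_cast; ring)
  have h8 := T_C (m+1) 3 (-1) 8 (-2) 0 (m+2) (m+1) (by norm_num) (by norm_num) (by norm_num) (by push_cast; ring) (by push_cast; ring)
  have h9 := T_C (m+1) 3 (-2) 8 (-2) (-1) (m+3) m (by norm_num) (by norm_num) (by norm_num) (by push_cast; ring) (by push_cast; ring)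
  have h10 := T_C (m+1) 3 0 8 (-2) 1 (m+1) (m+2) (by norm_num) (by norm_num) (by norm_num) (by push_cast; ring) (by push_cast; ring)
  have h11 := T_C (m+1) 7 0 12 2 1 (m+1) (m+2) (by norm_num) (by norm_num) (by norm_num) (by push_cast; ring) (by push_cast; ring)
  have h12 := T_C (m+2) 7 0 12 2 1 (m+2) (m+3) (by norm_num) (by norm_num) (by norm_num) (by push_cast; ring) (by push_cast; ring)
  have h13 := T_C (m+1) 7 1 12 2 2 m (m+3) (by norm_num) (by norm_num) (by norm_num) (by push_cast; ring) (by push_cast; ring)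
  have h14 := T_C (m+2) 7 1 12 2 2 (m+1) (m+4) (by norm_num) (by norm_num) (by norm_num) (by push_cast; ring) (by push_cast; ring)
  have h15 := T_C (m+1) 8 (-1) 13 3 0 (m+2) (m+1) (by norm_num) (by norm_num) (by norm_num) (by push_cast; ring) (by push_cast; ring)
  have h16 := T_C (m+1) 8 1 13 3 2 m (m+3) (by norm_num) (by norm_num) (by norm_num) (by push_cast; ring) (by push_cast; ring)
  have h17 := T_P30 (m+1)
  have h18 := T_P30 (m+2)
  have h19 := T_P30 (m+3)
  have h20 := T_S1 (m+1) (-7) (-1) 13 4 3 (by norm_num) (by norm_num) (by norm_num)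
  have h21 := T_S1 (m+2) (-7) (-1) 13 4 3 (by norm_num) (by norm_num) (by norm_num)
  have h22 := T_S1 (m+3) (-7) (-1) 13 4 3 (by norm_num) (by norm_num) (by norm_num)
  have h23 := T_S1 (m+1) (-8) (-2) 12 3 2 (by norm_num) (by norm_num) (by norm_num)
  have h24 := T_S2 (m+1) (-2) (-1) 2 1 (by norm_num) (by norm_num)
  have h25 := T_S2 (m+1) (-2) (-2) 2 2 (by norm_num) (by norm_num)
  have h26 := T_S2 (m+1) (-2) 0 2 0 (by norm_num) (by norm_num)
  have h27 := T_S2 (m+1) (-3) (-1) 3 1 (by norm_num) (by norm_num)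
  have h28 := T_S2 (m+2) (-3) (-1) 3 1 (by norm_num) (by norm_num)
  have h29 := T_S2 (m+1) (-3) 0 3 0 (by norm_num) (by norm_num)
  have h30 := T_S2 (m+2) (-3) 0 3 0 (by norm_num) (by norm_num)
  have h31 := T_S2 (m+3) (-3) 0 3 0 (by norm_num) (by norm_num)
  have h32 := T_S2 (m+1) (-3) 1 3 (-1) (by norm_num) (by norm_num)
  have h33 := T_S2 (m+2) (-3) 1 3 (-1) (by norm_num) (by norm_num)
  have h34 := T_S2 (m+1) (-7) (-1) 7 1 (by norm_num) (by norm_num)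
  have h35 := T_S2 (m+2) (-7) (-1) 7 1 (by norm_num) (by norm_num)
  have h36 := T_S2 (m+3) (-7) (-1) 7 1 (by norm_num) (by norm_num)
  have h37 := T_S2 (m+1) (-8) (-2) 8 2 (by norm_num) (by norm_num)
  have h38 := T_ST (m+2) (m+1) (by omega) 2 0 7 12 (-1) 1 (m+1) (m+2) (2*m+4) (by norm_num) (by norm_num) (by norm_num) (by norm_num) (by push_cast; ring) (by push_cast; ring) (by push_cast; ring)
  have h39 := T_ST (m+3) (m+2) (by omega) 2 0 7 12 (-1) 1 (m+2) (m+3) (2*m+6) (by norm_num) (by norm_num) (by norm_num) (by norm_num) (by push_cast; ring) (by push_cast; ring) (by push_cast; ring)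
  have h40 := T_ST (m+2) (m+1) (by omega) 2 1 7 12 0 2 (m+2) (m+3) (2*m+6) (by norm_num) (by norm_num) (by norm_num) (by norm_num) (by push_cast; ring) (by push_cast; ring) (by push_cast; ring)
  have h41 := T_ST (m+3) (m+2) (by omega) 2 1 7 12 0 2 (m+3) (m+4) (2*m+8) (by norm_num) (by norm_num) (by norm_num) (by norm_num) (by push_cast; ring) (by push_cast; ring) (by push_cast; ring)
  have h42 := T_ST (m+2) (m+1) (by omega) 2 2 7 12 1 3 (m+3) (m+4) (2*m+8) (by norm_num) (by norm_num) (by norm_num) (by norm_num) (by push_cast; ring) (by push_cast; ring) (by push_cast; ring)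
  have h43 := T_ST (m+2) (m+1) (by omega) 3 (-1) 8 13 (-2) 0 m (m+1) (2*m+2) (by norm_num) (by norm_num) (by norm_num) (by norm_num) (by push_cast; ring) (by push_cast; ring) (by push_cast; ring)
  have h44 := T_ST (m+2) (m+1) (by omega) 3 1 8 13 0 2 (m+2) (m+3) (2*m+6) (by norm_num) (by norm_num) (by norm_num) (by norm_num) (by push_cast; ring) (by push_cast; ring) (by push_cast; ring)
  linear_combination
    (- q^1 - q^(2*m+4)) * h1 +
    (1) * h2 +
    (1 - q^(4*m+7)) * h3 +
    (q^1 + q^(2*m+4) + q^(2*m+5)) * h4 +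
    (- 1) * h5 +
    (q^(2*m+4)) * h6 +
    (- 1) * h7 +
    (- q^(m+1)) * h8 +
    (- q^(m+1)) * h9 +
    (q^(m+3)) * h10 +
    (- q^(m+3) - q^(3*m+6)) * h11 +
    (q^(m+3)) * h12 +
    (q^(m+3) + q^(m+4) + q^(3*m+7)) * h13 +
    (- q^(m+4)) * h14 +
    (- q^(2*m+2)) * h15 +
    (q^(2*m+6)) * h16 +
    (q^(5*m+8)) * h17 +
    (- q^(m+3) - q^(3*m+6) - q^(3*m+7)) * h18 +
    (q^(m+3)) * h19 +
    (q^(5*m+9)) * h20 +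
    (- q^(m+4) - q^(3*m+7) - q^(3*m+8)) * h21 +
    (q^(m+4)) * h22 +
    (q^(2*m+6)) * h23 +
    (- q^(2*m+3)) * h24 +
    (- q^(2*m+4)) * h25 +
    (q^(2*m+4)) * h26 +
    (- q^(m+3) - q^(3*m+6)) * h27 +
    (q^(m+3)) * h28 +
    (q^(m+1) - q^(5*m+8)) * h29 +
    (q^(m+3) + q^(3*m+6) + q^(3*m+7)) * h30 +
    (- q^(m+3)) * h31 +
    (q^(3*m+4)) * h32 +
    (- q^(m+1)) * h33 +
    (- q^(5*m+9)) * h34 +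
    (q^(m+4) + q^(3*m+7) + q^(3*m+8)) * h35 +
    (- q^(m+4)) * h36 +
    (- q^(2*m+6)) * h37 +
    (- q^1 - q^(2*m+4)) * h38 +
    (1) * h39 +
    (1 + q^1 + q^(2*m+4)) * h40 +
    (- 1) * h41 +
    (- 1) * h42 +
    (- q^(m+1)) * h43 +
    (q^(m+3)) * h44


theorem stmt10 :
    (∀ n : ℕ, 3 ≤ n →
        P30 n = (1 + q ^ (2 * n - 3) + q ^ (2 * n - 2)) * P30 (n - 1)
          - q ^ (4 * n - 7) * P30 (n - 2)) ∧
      P30 1 = 1 ∧ P30 2 = 1 + q ^ 2 := by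
  exact ⟨fun n hn => P30_rec n hn, P30_one, P30_two⟩
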